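/- Conformal map from the hyperbolic to the spherical Einstein universe: under the coordinate change $\tau = -\ell\arctan(\cosh\theta/\sinh(t/\ell))$, $\Theta = \arctan(\sinh\theta/\cosh(t/\ell))$, $\Phi = \varphi$, restricted to the region where $\tau \in (-\ell\pi/2, 0)$ and $\Theta \in (0, -\tau/\ell)$, the metric $-dt^2 + \ell^2(d\theta^2 + \sinh^2\theta\, d\varphi^2)$ on $\mathbb{R}\times H^2$ is mapped, after multiplication by the conformal factor $\Omega^2 = \cos^2\Theta - \cos^2(\tau/\ell)$, to the metric $-d\tau^2 + \ell^2(d\Theta^2 + \sin^2\Theta\, d\Phi^2)$ of $\mathbb{R}\times S^2$. -/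

import Mathlib

noncomputable section

open Real

/-- The map (t,θ,φ) ↦ (τ,Θ,Φ) with τ = -ℓ arctan(cosh θ/sinh(t/ℓ)),
Θ = arctan(sinh θ/cosh(t/ℓ)), Φ = φ. -/
def hypToSphMap (ℓ : ℝ) (x : Fin 3 → ℝ) : Fin 3 → ℝ :=
  ![-(ℓ * Real.arctan (Real.cosh (x 1) / Real.sinh (x 0 / ℓ))),
    Real.arctan (Real.sinh (x 1) / Real.cosh (x 0 / ℓ)),
    x 2]

lemma key_conformal_algebra (ℓ a b c d u w t : ℝ) (hℓ : ℓ ≠ 0) (ha : a ≠ 0) (hb : b ≠ 0)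
    (hb2 : b ^ 2 = a ^ 2 + 1) (hd2 : d ^ 2 = c ^ 2 + 1) :
    -(-(ℓ * (1 / (1 + (d / a) ^ 2) * (d * (-(a ^ 2)⁻¹ * (b * (ℓ⁻¹ * u))) + a⁻¹ * (c * w))))) ^ 2
      + ℓ ^ 2 * ((1 / (1 + (c / b) ^ 2) * (c * (-(b ^ 2)⁻¹ * (a * (ℓ⁻¹ * u))) + b⁻¹ * (d * w))) ^ 2
        + (c / b) ^ 2 / (1 + (c / b) ^ 2) * t ^ 2)
      = (1 / (1 + (c / b) ^ 2) - 1 / (1 + (d / a) ^ 2)) * (-u ^ 2 + ℓ ^ 2 * (w ^ 2 + c ^ 2 * t ^ 2)) := by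
  have hD : (0:ℝ) < b ^ 2 + c ^ 2 := by positivity
  have e1 : 1 + (d / a) ^ 2 = (b ^ 2 + c ^ 2) / a ^ 2 := by
    field_simp
    linear_combination hd2 - hb2
  have e2 : 1 + (c / b) ^ 2 = (b ^ 2 + c ^ 2) / b ^ 2 := by
    field_simp
  have t0 : -(ℓ * (1 / ((b ^ 2 + c ^ 2) / a ^ 2) * (d * (-(a ^ 2)⁻¹ * (b * (ℓ⁻¹ * u))) + a⁻¹ * (c * w))))
      = (b * d * u - ℓ * (a * c * w)) / (b ^ 2 + c ^ 2) := by
    rw [one_div_div]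
    field_simp
    ring
  have t1 : 1 / ((b ^ 2 + c ^ 2) / b ^ 2) * (c * (-(b ^ 2)⁻¹ * (a * (ℓ⁻¹ * u))) + b ⁻¹ * (d * w))
      = (ℓ * (b * d * w) - a * c * u) / (ℓ * (b ^ 2 + c ^ 2)) := by
    rw [one_div_div]
    field_simp
    ring
  have t2 : (c / b) ^ 2 / ((b ^ 2 + c ^ 2) / b ^ 2) = c ^ 2 / (b ^ 2 + c ^ 2) := by
    rw [div_pow, div_div_div_comm, div_self (pow_ne_zero 2 hb), div_one]
  rw [e1, e2, t0, t1, t2, one_div_div, one_div_div]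
  field_simp
  linear_combination
    ((ℓ ^ 2 * w ^ 2 - u ^ 2) * c ^ 2
      - (b ^ 2 + c ^ 2) * (-u ^ 2 + ℓ ^ 2 * (w ^ 2 + c ^ 2 * t ^ 2))) * hb2
    + ((ℓ ^ 2 * w ^ 2 - u ^ 2) * b ^ 2) * hd2

/-- **Conformal map from ℝ×H² to ℝ×S².** On the region t > 0 (so that
τ ∈ (-ℓπ/2,0) and Θ ∈ [0, -τ/ℓ)), the pullback of the Einstein static universe
metric -dτ² + ℓ²(dΘ² + sin²Θ dΦ²) under the map equals
Ω²(-dt² + ℓ²(dθ² + sinh²θ dφ²)) with Ω² = cos²Θ - cos²(τ/ℓ). -/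
theorem hyperbolic_to_sphere_conformal (ℓ : ℝ) (hℓ : 0 < ℓ) :
    ∀ x : Fin 3 → ℝ, 0 < x 0 →
      ∀ v : Fin 3 → ℝ,
        -(fderiv ℝ (fun z => hypToSphMap ℓ z 0) x v) ^ 2
            + ℓ ^ 2 * ((fderiv ℝ (fun z => hypToSphMap ℓ z 1) x v) ^ 2
              + Real.sin (hypToSphMap ℓ x 1) ^ 2 *
                  (fderiv ℝ (fun z => hypToSphMap ℓ z 2) x v) ^ 2)
          = (Real.cos (hypToSphMap ℓ x 1) ^ 2
              - Real.cos (hypToSphMap ℓ x 0 / ℓ) ^ 2) *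
            (-(v 0) ^ 2 + ℓ ^ 2 * ((v 1) ^ 2 + Real.sinh (x 1) ^ 2 * (v 2) ^ 2)) := by
  intro x hx v
  have hℓ' : ℓ ≠ 0 := hℓ.ne'
  have hs : 0 < x 0 / ℓ := div_pos hx hℓ
  have hss : 0 < Real.sinh (x 0 / ℓ) := Real.sinh_pos_iff.mpr hs
  have hcs : 0 < Real.cosh (x 0 / ℓ) := Real.cosh_pos _
  set p0 : (Fin 3 → ℝ) →L[ℝ] ℝ := ContinuousLinearMap.proj 0 with hp0def
  set p1 : (Fin 3 → ℝ) →L[ℝ] ℝ := ContinuousLinearMap.proj 1 with hp1def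
  set p2 : (Fin 3 → ℝ) →L[ℝ] ℝ := ContinuousLinearMap.proj 2 with hp2def
  have hp0 : HasFDerivAt (fun z : Fin 3 → ℝ => z 0) p0 x := p0.hasFDerivAt
  have hp1 : HasFDerivAt (fun z : Fin 3 → ℝ => z 1) p1 x := p1.hasFDerivAt
  have hp2 : HasFDerivAt (fun z : Fin 3 → ℝ => z 2) p2 x := p2.hasFDerivAt
  have hdiv : HasFDerivAt (fun z : Fin 3 → ℝ => z 0 / ℓ) (ℓ⁻¹ • p0) x := by
    simpa [div_eq_inv_mul] using hp0.const_mul ℓ⁻¹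
  -- component 0
  have hden0 : HasFDerivAt (fun z : Fin 3 → ℝ => Real.sinh (z 0 / ℓ))
      (Real.cosh (x 0 / ℓ) • (ℓ⁻¹ • p0)) x :=
    (Real.hasDerivAt_sinh (x 0 / ℓ)).comp_hasFDerivAt (h₂ := Real.sinh) x hdiv
  have hnum0 : HasFDerivAt (fun z : Fin 3 → ℝ => Real.cosh (z 1))
      (Real.sinh (x 1) • p1) x :=
    (Real.hasDerivAt_cosh (x 1)).comp_hasFDerivAt (h₂ := Real.cosh) x hp1
  have hinv0 : HasFDerivAt (fun z : Fin 3 → ℝ => (Real.sinh (z 0 / ℓ))⁻¹)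
      ((-(Real.sinh (x 0 / ℓ) ^ 2)⁻¹) • (Real.cosh (x 0 / ℓ) • (ℓ⁻¹ • p0))) x :=
    (hasDerivAt_inv hss.ne').comp_hasFDerivAt x hden0
  have hA : HasFDerivAt (fun z : Fin 3 → ℝ => Real.cosh (z 1) / Real.sinh (z 0 / ℓ))
      (Real.cosh (x 1) • ((-(Real.sinh (x 0 / ℓ) ^ 2)⁻¹) • (Real.cosh (x 0 / ℓ) • (ℓ⁻¹ • p0)))
        + (Real.sinh (x 0 / ℓ))⁻¹ • (Real.sinh (x 1) • p1)) x := by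
    simpa [div_eq_mul_inv, Pi.mul_def] using hnum0.mul hinv0
  have harc0 := (Real.hasDerivAt_arctan
    (Real.cosh (x 1) / Real.sinh (x 0 / ℓ))).comp_hasFDerivAt x hA
  have hf0 : HasFDerivAt
      (fun z : Fin 3 → ℝ => -(ℓ * Real.arctan (Real.cosh (z 1) / Real.sinh (z 0 / ℓ))))
      (-(ℓ • (1 / (1 + (Real.cosh (x 1) / Real.sinh (x 0 / ℓ)) ^ 2)) •
        (Real.cosh (x 1) • (-(Real.sinh (x 0 / ℓ) ^ 2)⁻¹) • Real.cosh (x 0 / ℓ) • ℓ⁻¹ • p0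
          + (Real.sinh (x 0 / ℓ))⁻¹ • Real.sinh (x 1) • p1))) x :=
    (harc0.const_mul ℓ).neg
  -- component 1
  have hden1 : HasFDerivAt (fun z : Fin 3 → ℝ => Real.cosh (z 0 / ℓ))
      (Real.sinh (x 0 / ℓ) • (ℓ⁻¹ • p0)) x :=
    (Real.hasDerivAt_cosh (x 0 / ℓ)).comp_hasFDerivAt (h₂ := Real.cosh) x hdiv
  have hnum1 : HasFDerivAt (fun z : Fin 3 → ℝ => Real.sinh (z 1))
      (Real.cosh (x 1) • p1) x :=
    (Real.hasDerivAt_sinh (x 1)).comp_hasFDerivAt (h₂ := Real.sinh) x hp1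
  have hinv1 : HasFDerivAt (fun z : Fin 3 → ℝ => (Real.cosh (z 0 / ℓ))⁻¹)
      ((-(Real.cosh (x 0 / ℓ) ^ 2)⁻¹) • (Real.sinh (x 0 / ℓ) • (ℓ⁻¹ • p0))) x :=
    (hasDerivAt_inv hcs.ne').comp_hasFDerivAt x hden1
  have hB : HasFDerivAt (fun z : Fin 3 → ℝ => Real.sinh (z 1) / Real.cosh (z 0 / ℓ))
      (Real.sinh (x 1) • ((-(Real.cosh (x 0 / ℓ) ^ 2)⁻¹) • (Real.sinh (x 0 / ℓ) • (ℓ⁻¹ • p0)))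
        + (Real.cosh (x 0 / ℓ))⁻¹ • (Real.cosh (x 1) • p1)) x := by
    simpa [div_eq_mul_inv, Pi.mul_def] using hnum1.mul hinv1
  have hf1 : HasFDerivAt
      (fun z : Fin 3 → ℝ => Real.arctan (Real.sinh (z 1) / Real.cosh (z 0 / ℓ)))
      ((1 / (1 + (Real.sinh (x 1) / Real.cosh (x 0 / ℓ)) ^ 2)) •
        (Real.sinh (x 1) • (-(Real.cosh (x 0 / ℓ) ^ 2)⁻¹) • Real.sinh (x 0 / ℓ) • ℓ⁻¹ • p0
          + (Real.cosh (x 0 / ℓ))⁻¹ • Real.cosh (x 1) • p1)) x :=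
    (Real.hasDerivAt_arctan
    (Real.sinh (x 1) / Real.cosh (x 0 / ℓ))).comp_hasFDerivAt (h₂ := Real.arctan) x hB
  -- rewrite the three fderivs
  have e0 : (fun z : Fin 3 → ℝ => hypToSphMap ℓ z 0)
      = fun z : Fin 3 → ℝ => -(ℓ * Real.arctan (Real.cosh (z 1) / Real.sinh (z 0 / ℓ))) := by
    funext z; simp [hypToSphMap]
  have e1 : (fun z : Fin 3 → ℝ => hypToSphMap ℓ z 1)
      = fun z : Fin 3 → ℝ => Real.arctan (Real.sinh (z 1) / Real.cosh (z 0 / ℓ)) := by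
    funext z; simp [hypToSphMap]
  have e2 : (fun z : Fin 3 → ℝ => hypToSphMap ℓ z 2) = fun z : Fin 3 → ℝ => z 2 := by
    funext z; simp [hypToSphMap]
  rw [e0, e1, e2, hf0.fderiv, hf1.fderiv, hp2.fderiv]
  simp only [hypToSphMap, Matrix.cons_val_zero, Matrix.cons_val_one, Matrix.head_cons,
    ContinuousLinearMap.neg_apply, ContinuousLinearMap.smul_apply,
    ContinuousLinearMap.add_apply, ContinuousLinearMap.proj_apply, smul_eq_mul,
    hp0def, hp1def, hp2def]
  have hsin2 : Real.sin (Real.arctan (Real.sinh (x 1) / Real.cosh (x 0 / ℓ))) ^ 2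
      = (Real.sinh (x 1) / Real.cosh (x 0 / ℓ)) ^ 2
        / (1 + (Real.sinh (x 1) / Real.cosh (x 0 / ℓ)) ^ 2) := by
    rw [Real.sin_arctan, div_pow, Real.sq_sqrt (by positivity)]
  have hcos2 : Real.cos (Real.arctan (Real.sinh (x 1) / Real.cosh (x 0 / ℓ))) ^ 2
      = 1 / (1 + (Real.sinh (x 1) / Real.cosh (x 0 / ℓ)) ^ 2) := Real.cos_sq_arctan _
  have hcos2' : Real.cos (-(ℓ * Real.arctan (Real.cosh (x 1) / Real.sinh (x 0 / ℓ))) / ℓ) ^ 2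
      = 1 / (1 + (Real.cosh (x 1) / Real.sinh (x 0 / ℓ)) ^ 2) := by
    rw [neg_div, mul_div_cancel_left₀ _ hℓ', Real.cos_neg, Real.cos_sq_arctan]
  rw [hsin2, hcos2, hcos2']
  have h1 : Real.cosh (x 0 / ℓ) ^ 2 = Real.sinh (x 0 / ℓ) ^ 2 + 1 := Real.cosh_sq _
  have h2 : Real.cosh (x 1) ^ 2 = Real.sinh (x 1) ^ 2 + 1 := Real.cosh_sq _
  have hd : 0 < Real.cosh (x 1) := Real.cosh_pos _
  exact key_conformal_algebra ℓ (Real.sinh (x 0 / ℓ)) (Real.cosh (x 0 / ℓ)) (Real.sinh (x 1))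
    (Real.cosh (x 1)) (v 0) (v 1) (v 2) hℓ' hss.ne' hcs.ne' (Real.cosh_sq _) (Real.cosh_sq _)


end
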